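/- Assume the constraint h^(2) − 2h_1 = z² holds in R((z⁻¹)). Then the series H^(3) := h^(3) − 3h_1·h^(1) + 3h_2·h^(0) satisfies: the coefficient of z³ in H^(3) equals 1; the coefficients of z², z¹ and z⁰ in H^(3) all vanish; and the coefficients of z^{-1}, z^{-2}, z^{-3} in H^(3) are h_3 − h_1², h_4 − h_1h_2, and h_5 − h_1h_3, respectively. -/

import Mathlib

/-
We model the ring `R((z⁻¹))` of formal Laurent series in `z⁻¹` over `R`
as `HahnSeries ℤ R`, with the convention that the index `n : ℤ` records the
coefficient of `z^(-n)`; thus the coefficient of `zᵐ` in `f` is `f.coeff (-m)`,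
`z = HahnSeries.single (-1) 1`, and `h_l = h.coeff l` for `l ≥ 1`.
-/

/-- The coefficientwise extension of an additive map `d : R → R` to `R((z⁻¹))`. -/
noncomputable def coeffExt {R : Type*} [CommRing R] (d : R →+ R)
    (f : HahnSeries ℤ R) : HahnSeries ℤ R where
  coeff n := d (f.coeff n)
  isPWO_support' := f.isPWO_support'.mono (fun n hn => by
    simp only [Function.mem_support] at hn ⊢
    exact fun h => hn (by rw [h, map_zero]))

/-- The Faà di Bruno iterates `h^(0) = 1`, `h^(k+1) = d(h^(k)) + h * h^(k)` in `R((z⁻¹))`. -/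
noncomputable def fdb {R : Type*} [CommRing R] (d : R →+ R)
    (h : HahnSeries ℤ R) : ℕ → HahnSeries ℤ R
  | 0 => 1
  | k + 1 => coeffExt d (fdb d h k) + h * fdb d h k

lemma coeffExt_coeff {R : Type*} [CommRing R] (d : R →+ R)
    (f : HahnSeries ℤ R) (n : ℤ) : (coeffExt d f).coeff n = d (f.coeff n) := rfl

lemma fdb_zero {R : Type*} [CommRing R] (d : R →+ R) (h : HahnSeries ℤ R) :
    fdb d h 0 = 1 := rfl

lemma fdb_succ {R : Type*} [CommRing R] (d : R →+ R) (h : HahnSeries ℤ R) (k : ℕ) :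
    fdb d h (k + 1) = coeffExt d (fdb d h k) + h * fdb d h k := rfl

/-- Let `h = z + Σ_{l ≥ 1} h_l z^(-l)` in `R((z⁻¹))` and assume the constraint
`h^(2) - 2h_1 = z²`.  Then `H^(3) := h^(3) - 3h_1 • h^(1) + 3h_2 • h^(0)`
satisfies: the coefficient of `z³` equals `1`; the coefficients of `z²`, `z¹`,
`z⁰` all vanish; and the coefficients of `z⁻¹`, `z⁻²`, `z⁻³` are
`h_3 - h_1²`, `h_4 - h_1h_2`, `h_5 - h_1h_3` respectively. -/
theorem H3_coefficients
    {R : Type*} [CommRing R] (d : R →+ R)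
    (hd : ∀ a b : R, d (a * b) = a * d b + d a * b)
    (h : HahnSeries ℤ R)
    (hz : h.coeff (-1) = 1)
    (h0 : h.coeff 0 = 0)
    (hpos : ∀ m : ℤ, 2 ≤ m → h.coeff (-m) = 0)
    (constraint : fdb d h 2 - HahnSeries.C (2 * h.coeff 1) =
      (HahnSeries.single (-1 : ℤ) (1 : R)) ^ 2) :
    (fdb d h 3 - (3 * h.coeff 1) • fdb d h 1
        + (3 * h.coeff 2) • fdb d h 0).coeff (-3) = 1 ∧
    (fdb d h 3 - (3 * h.coeff 1) • fdb d h 1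
        + (3 * h.coeff 2) • fdb d h 0).coeff (-2) = 0 ∧
    (fdb d h 3 - (3 * h.coeff 1) • fdb d h 1
        + (3 * h.coeff 2) • fdb d h 0).coeff (-1) = 0 ∧
    (fdb d h 3 - (3 * h.coeff 1) • fdb d h 1
        + (3 * h.coeff 2) • fdb d h 0).coeff 0 = 0 ∧
    (fdb d h 3 - (3 * h.coeff 1) • fdb d h 1
        + (3 * h.coeff 2) • fdb d h 0).coeff 1 = h.coeff 3 - h.coeff 1 ^ 2 ∧
    (fdb d h 3 - (3 * h.coeff 1) • fdb d h 1
        + (3 * h.coeff 2) • fdb d h 0).coeff 2 = h.coeff 4 - h.coeff 1 * h.coeff 2 ∧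
    (fdb d h 3 - (3 * h.coeff 1) • fdb d h 1
        + (3 * h.coeff 2) • fdb d h 0).coeff 3 = h.coeff 5 - h.coeff 1 * h.coeff 3 := by
  classical
  have hd1 : d (1 : R) = 0 := by
    have e := hd 1 1
    rw [mul_one, one_mul, mul_one] at e
    exact (left_eq_add.mp e)
  -- fdb d h 1 = h
  have fdb1 : fdb d h 1 = h := by
    rw [show (1 : ℕ) = 0 + 1 from rfl, fdb_succ, fdb_zero, mul_one]
    have : coeffExt d (1 : HahnSeries ℤ R) = 0 := by
      ext n
      rw [coeffExt_coeff, HahnSeries.coeff_one, HahnSeries.coeff_zero]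
      split
      · exact hd1
      · exact map_zero d
    rw [this, zero_add]
  set z : HahnSeries ℤ R := HahnSeries.single (-1 : ℤ) (1 : R) with hzdef
  set t : HahnSeries ℤ R := h - z with htdef
  have ht0 : ∀ n : ℤ, n ≤ 0 → t.coeff n = 0 := by
    intro n hn
    rw [htdef, HahnSeries.coeff_sub, hzdef, HahnSeries.coeff_single]
    rcases eq_or_ne n (-1) with rfl | hne
    · simp [hz]
    · rw [if_neg hne, sub_zero]
      rcases eq_or_ne n 0 with rfl | hne0
      · exact h0
      · simpa using hpos (-n) (by omega)
  have ht1 : ∀ n : ℤ, 1 ≤ n → t.coeff n = h.coeff n := by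
    intro n hn
    rw [htdef, HahnSeries.coeff_sub, hzdef, HahnSeries.coeff_single,
      if_neg (by omega : n ≠ -1), sub_zero]
  have htt : (t * t).coeff 1 = 0 := by
    rw [HahnSeries.coeff_mul]
    refine Finset.sum_eq_zero fun ij hij => ?_
    rw [Finset.mem_addAntidiagonal] at hij
    obtain ⟨hi, hj, hsum⟩ := hij
    rw [HahnSeries.mem_support] at hi hj
    exfalso
    have hi1 : 1 ≤ ij.1 := by by_contra hc; exact hi (ht0 ij.1 (by omega))
    have hj1 : 1 ≤ ij.2 := by by_contra hc; exact hj (ht0 ij.2 (by omega))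
    omega
  have hzt : (z * t).coeff 1 = t.coeff 2 := by
    have h1 : (2 : ℤ) + (-1) = 1 := by norm_num
    calc (z * t).coeff 1 = (HahnSeries.single (-1 : ℤ) (1 : R) * t).coeff (2 + (-1)) := by
          rw [h1, hzdef]
      _ = 1 * t.coeff 2 := HahnSeries.coeff_single_mul_add
      _ = t.coeff 2 := one_mul _
  have htz : (t * z).coeff 1 = t.coeff 2 := by
    have h1 : (2 : ℤ) + (-1) = 1 := by norm_num
    calc (t * z).coeff 1 = (t * HahnSeries.single (-1 : ℤ) (1 : R)).coeff (2 + (-1)) := by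
          rw [h1, hzdef]
      _ = t.coeff 2 * 1 := HahnSeries.coeff_mul_single_add
      _ = t.coeff 2 := mul_one _
  have hzz : (z * z).coeff 1 = 0 := by
    rw [hzdef, HahnSeries.single_mul_single]
    rw [HahnSeries.coeff_single, if_neg (by norm_num)]
  have hhsq : (h * h).coeff 1 = 2 * h.coeff 2 := by
    have e : h * h = z * z + z * t + t * z + t * t := by rw [htdef]; ring
    rw [e, HahnSeries.coeff_add, HahnSeries.coeff_add, HahnSeries.coeff_add,
      hzz, hzt, htz, htt, ht1 2 (by norm_num)]
    ring
  -- Structure of fdb d h 2 from the constraint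
  have h2eq : fdb d h 2 = HahnSeries.single (-2 : ℤ) (1 : R)
      + HahnSeries.C (2 * h.coeff 1) := by
    have hsq : (HahnSeries.single (-1 : ℤ) (1 : R)) ^ 2
        = HahnSeries.single (-2 : ℤ) (1 : R) := by
      rw [sq, HahnSeries.single_mul_single]; norm_num
    rw [hsq] at constraint
    linear_combination constraint
  have f2c : ∀ n : ℤ, (fdb d h 2).coeff n =
      (if n = -2 then (1 : R) else 0) + (if n = 0 then 2 * h.coeff 1 else 0) := by
    intro n
    rw [h2eq, HahnSeries.coeff_add, HahnSeries.coeff_single, HahnSeries.C_apply,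
      HahnSeries.coeff_single]
    congr 1 <;> split_ifs <;> rfl
  have f2def : fdb d h 2 = coeffExt d h + h * h := by
    rw [show (2 : ℕ) = 1 + 1 from rfl, fdb_succ, fdb1]
  have dh1 : d (h.coeff 1) = -(2 * h.coeff 2) := by
    have e1 := f2c 1
    rw [f2def, HahnSeries.coeff_add, coeffExt_coeff, hhsq] at e1
    rw [if_neg (by norm_num), if_neg (by norm_num)] at e1
    linear_combination e1
  -- coefficient lemmas for multiplication by singles
  have hm2 : ∀ n : ℤ, (h * HahnSeries.single (-2 : ℤ) (1 : R)).coeff n = h.coeff (n + 2) := by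
    intro n
    have e : n + 2 + (-2) = n := by ring
    calc (h * HahnSeries.single (-2 : ℤ) (1 : R)).coeff n
        = (h * HahnSeries.single (-2 : ℤ) (1 : R)).coeff (n + 2 + (-2)) := by rw [e]
      _ = h.coeff (n + 2) * 1 := HahnSeries.coeff_mul_single_add
      _ = h.coeff (n + 2) := mul_one _
  have hm0 : ∀ n : ℤ, (h * HahnSeries.C (2 * h.coeff 1)).coeff n
      = h.coeff n * (2 * h.coeff 1) := by
    intro n
    rw [HahnSeries.C_apply]
    have e : n + 0 = n := add_zero n
    calc (h * HahnSeries.single (0 : ℤ) (2 * h.coeff 1)).coeff n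
        = (h * HahnSeries.single (0 : ℤ) (2 * h.coeff 1)).coeff (n + 0) := by rw [e]
      _ = h.coeff n * (2 * h.coeff 1) := HahnSeries.coeff_mul_single_add
  -- main coefficient formula
  have main : ∀ n : ℤ,
      (fdb d h 3 - (3 * h.coeff 1) • fdb d h 1 + (3 * h.coeff 2) • fdb d h 0).coeff n
      = d ((if n = -2 then (1 : R) else 0) + (if n = 0 then 2 * h.coeff 1 else 0))
        + h.coeff (n + 2) + h.coeff n * (2 * h.coeff 1)
        - 3 * h.coeff 1 * h.coeff n
        + 3 * h.coeff 2 * (if n = 0 then (1 : R) else 0) := by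
    intro n
    rw [show (3 : ℕ) = 2 + 1 from rfl, fdb_succ, fdb1, fdb_zero]
    rw [h2eq, mul_add]
    rw [HahnSeries.coeff_add, HahnSeries.coeff_sub, HahnSeries.coeff_add,
      HahnSeries.coeff_add, HahnSeries.coeff_smul, HahnSeries.coeff_smul,
      HahnSeries.coeff_one, coeffExt_coeff, hm2 n, hm0 n]
    rw [HahnSeries.coeff_add, HahnSeries.coeff_single, HahnSeries.C_apply,
      HahnSeries.coeff_single]
    simp only [smul_eq_mul]
    ring
  refine ⟨?_, ?_, ?_, ?_, ?_, ?_, ?_⟩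
  · rw [main (-3)]
    rw [if_neg (by norm_num), if_neg (by norm_num), if_neg (by norm_num)]
    have e1 : (-3 : ℤ) + 2 = -1 := by norm_num
    rw [e1, hz, hpos 3 (by norm_num)]
    simp
  · rw [main (-2)]
    rw [if_pos rfl, if_neg (by norm_num), if_neg (by norm_num)]
    have e1 : (-2 : ℤ) + 2 = 0 := by norm_num
    rw [e1, h0, hpos 2 (by norm_num)]
    simp [hd1]
  · rw [main (-1)]
    rw [if_neg (by norm_num), if_neg (by norm_num), if_neg (by norm_num)]
    have e1 : (-1 : ℤ) + 2 = 1 := by norm_num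
    rw [e1, hz]
    simp only [add_zero, zero_add, map_zero]
    ring
  · rw [main 0]
    rw [if_neg (by norm_num), if_pos rfl, if_pos rfl]
    have e1 : (0 : ℤ) + 2 = 2 := by norm_num
    rw [e1, h0, zero_add]
    have : d (2 * h.coeff 1) = 2 * d (h.coeff 1) := by
      rw [two_mul, map_add, two_mul]
    rw [this, dh1]
    ring
  · rw [main 1]
    rw [if_neg (by norm_num), if_neg (by norm_num), if_neg (by norm_num)]
    have e1 : (1 : ℤ) + 2 = 3 := by norm_num
    rw [e1]
    simp only [add_zero, zero_add, map_zero]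
    ring
  · rw [main 2]
    rw [if_neg (by norm_num), if_neg (by norm_num), if_neg (by norm_num)]
    have e1 : (2 : ℤ) + 2 = 4 := by norm_num
    rw [e1]
    simp only [add_zero, zero_add, map_zero]
    ring
  · rw [main 3]
    rw [if_neg (by norm_num), if_neg (by norm_num), if_neg (by norm_num)]
    have e1 : (3 : ℤ) + 2 = 5 := by norm_num
    rw [e1]
    simp only [add_zero, zero_add, map_zero]
    ring
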